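/- The Leibniz algebras K₁(1,1), K₁(1,0), K₁(0,1), K₁(0,0) are pairwise non-isomorphic, where K₁(α₁,α₂) is the 6-dimensional complex Leibniz algebra with basis {l, p₊, p₋, X₁, X₂, X₃} and nonzero products [l,p₊]=p₊, [p₊,l]=-p₊, [l,p₋]=-p₋, [p₋,l]=p₋, [l,l]=α₁X₁, [p₊,p₋]=α₂X₁, [p₋,p₊]=-α₂X₁, [X₁,p₊]=X₂, [X₁,p₋]=-X₃, [X₂,l]=-X₂, [X₃,l]=X₃. -/
import Mathlib

/-- Standard basis vector of `Fin 6 → ℂ`. -/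
noncomputable def e₆ (i : Fin 6) : Fin 6 → ℂ := Pi.single i 1

/-- The bracket of the algebra `K₁(α₁,α₂)` on `Fin 6 → ℂ`, with basis ordering
`0 = l, 1 = p₊, 2 = p₋, 3 = X₁, 4 = X₂, 5 = X₃` and nonzero products
`[l,p₊]=p₊, [p₊,l]=-p₊, [l,p₋]=-p₋, [p₋,l]=p₋, [l,l]=α₁X₁, [p₊,p₋]=α₂X₁,
[p₋,p₊]=-α₂X₁, [X₁,p₊]=X₂, [X₁,p₋]=-X₃, [X₂,l]=-X₂, [X₃,l]=X₃`. -/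
noncomputable def K1 (a₁ a₂ : ℂ) (u v : Fin 6 → ℂ) : Fin 6 → ℂ :=
  ∑ i : Fin 6, ∑ j : Fin 6, (u i * v j) •
    ![![a₁ • e₆ 3, e₆ 1, -(e₆ 2), 0, 0, 0],
      ![-(e₆ 1), 0, a₂ • e₆ 3, 0, 0, 0],
      ![e₆ 2, -(a₂ • e₆ 3), 0, 0, 0, 0],
      ![0, e₆ 4, -(e₆ 5), 0, 0, 0],
      ![-(e₆ 4), 0, 0, 0, 0, 0],
      ![e₆ 5, 0, 0, 0, 0, 0]] i j

section cv
variable {α : Type*} (a b c d e f : α)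
lemma cv0 : ![a,b,c,d,e,f] 0 = a := rfl
lemma cv1 : ![a,b,c,d,e,f] 1 = b := rfl
lemma cv2 : ![a,b,c,d,e,f] 2 = c := rfl
lemma cv3 : ![a,b,c,d,e,f] 3 = d := rfl
lemma cv4 : ![a,b,c,d,e,f] 4 = e := rfl
lemma cv5 : ![a,b,c,d,e,f] 5 = f := rfl
end cv

lemma K1_vec (a₁ a₂ : ℂ) (u v : Fin 6 → ℂ) :
    K1 a₁ a₂ u v = (u 0 * v 1 - u 1 * v 0) • e₆ 1 + (u 2 * v 0 - u 0 * v 2) • e₆ 2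
      + (a₁ * (u 0 * v 0) + a₂ * (u 1 * v 2 - u 2 * v 1)) • e₆ 3
      + (u 3 * v 1 - u 4 * v 0) • e₆ 4 + (u 5 * v 0 - u 3 * v 2) • e₆ 5 := by
  simp only [K1, Fin.sum_univ_six, cv0, cv1, cv2, cv3, cv4, cv5]
  module

lemma K1_apply (a₁ a₂ : ℂ) (u v : Fin 6 → ℂ) :
    K1 a₁ a₂ u v = ![0, u 0 * v 1 - u 1 * v 0, u 2 * v 0 - u 0 * v 2,
      a₁ * (u 0 * v 0) + a₂ * (u 1 * v 2 - u 2 * v 1),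
      u 3 * v 1 - u 4 * v 0, u 5 * v 0 - u 3 * v 2] := by
  rw [K1_vec]
  funext k
  fin_cases k <;> simp [e₆, Pi.single_apply, cv0, cv1, cv2, cv3, cv4, cv5]

lemma K1_add_left (a₁ a₂ : ℂ) (x y w : Fin 6 → ℂ) :
    K1 a₁ a₂ (x + y) w = K1 a₁ a₂ x w + K1 a₁ a₂ y w := by
  simp only [K1_apply, Pi.add_apply]
  funext k
  fin_cases k <;> simp [cv0, cv1, cv2, cv3, cv4, cv5] <;> ring

lemma K1_smul_left (a₁ a₂ : ℂ) (c : ℂ) (x w : Fin 6 → ℂ) :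
    K1 a₁ a₂ (c • x) w = c • K1 a₁ a₂ x w := by
  simp only [K1_apply, Pi.smul_apply, smul_eq_mul]
  funext k
  fin_cases k <;> simp [cv0, cv1, cv2, cv3, cv4, cv5] <;> ring

lemma K1_zero_left (a₁ a₂ : ℂ) (w : Fin 6 → ℂ) : K1 a₁ a₂ 0 w = 0 := by
  simp only [K1_apply, Pi.zero_apply]
  funext k
  fin_cases k <;> simp [cv0, cv1, cv2, cv3, cv4, cv5]

open Submodule Module Set

/-- Span of the set of squares `[x,x]`. -/
noncomputable def Sq (a₁ a₂ : ℂ) : Submodule ℂ (Fin 6 → ℂ) :=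
  span ℂ {w | ∃ u, w = K1 a₁ a₂ u u}

/-- The set of `x` annihilating all `[u,v]` from the left. -/
noncomputable def Cc (a₁ a₂ : ℂ) : Submodule ℂ (Fin 6 → ℂ) where
  carrier := {x | ∀ u v, K1 a₁ a₂ x (K1 a₁ a₂ u v) = 0}
  zero_mem' := fun u v => K1_zero_left a₁ a₂ _
  add_mem' := by
    intro x y hx hy u v
    rw [K1_add_left, hx u v, hy u v, add_zero]
  smul_mem' := by
    intro c x hx u v
    rw [K1_smul_left, hx u v, smul_zero]

lemma mem_Cc {a₁ a₂ : ℂ} {x : Fin 6 → ℂ} :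
    x ∈ Cc a₁ a₂ ↔ ∀ u v, K1 a₁ a₂ x (K1 a₁ a₂ u v) = 0 := Iff.rfl

variable {p₁ p₂ q₁ q₂ : ℂ} {f : (Fin 6 → ℂ) ≃ₗ[ℂ] (Fin 6 → ℂ)}

lemma map_Sq (hf : ∀ u v, f (K1 p₁ p₂ u v) = K1 q₁ q₂ (f u) (f v)) :
    (Sq p₁ p₂).map (f : (Fin 6 → ℂ) →ₗ[ℂ] (Fin 6 → ℂ)) = Sq q₁ q₂ := by
  rw [Sq, Sq, Submodule.map_span]
  congr 1
  ext w
  constructor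
  · rintro ⟨_, ⟨u, rfl⟩, rfl⟩
    exact ⟨f u, by simp only [LinearEquiv.coe_coe]; exact hf u u⟩
  · rintro ⟨u, rfl⟩
    refine ⟨K1 p₁ p₂ (f.symm u) (f.symm u), ⟨_, rfl⟩, ?_⟩
    simp only [LinearEquiv.coe_coe, hf, LinearEquiv.apply_symm_apply]

lemma map_Cc (hf : ∀ u v, f (K1 p₁ p₂ u v) = K1 q₁ q₂ (f u) (f v)) :
    (Cc p₁ p₂).map (f : (Fin 6 → ℂ) →ₗ[ℂ] (Fin 6 → ℂ)) = Cc q₁ q₂ := by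
  apply le_antisymm
  · rintro _ ⟨x, hx, rfl⟩
    intro u v
    show K1 q₁ q₂ (f x) (K1 q₁ q₂ u v) = 0
    have e1 : K1 q₁ q₂ u v = f (K1 p₁ p₂ (f.symm u) (f.symm v)) := by
      rw [hf]; simp
    rw [e1, ← hf, hx (f.symm u) (f.symm v), map_zero]
  · intro x hx
    refine ⟨f.symm x, fun u v => ?_, by simp⟩
    apply f.injective
    rw [map_zero, hf, hf]
    simp only [LinearEquiv.apply_symm_apply]
    exact hx (f u) (f v)

lemma rank_Sq_eq (hf : ∀ u v, f (K1 p₁ p₂ u v) = K1 q₁ q₂ (f u) (f v)) :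
    finrank ℂ (Sq p₁ p₂) = finrank ℂ (Sq q₁ q₂) := by
  rw [← map_Sq hf, LinearEquiv.finrank_map_eq]

lemma rank_Cc_eq (hf : ∀ u v, f (K1 p₁ p₂ u v) = K1 q₁ q₂ (f u) (f v)) :
    finrank ℂ (Cc p₁ p₂) = finrank ℂ (Cc q₁ q₂) := by
  rw [← map_Cc hf, LinearEquiv.finrank_map_eq]

lemma e₆_li {n : ℕ} (g : Fin n → Fin 6) (hg : Function.Injective g) :
    LinearIndependent ℂ (e₆ ∘ g) := by
  have hb := (Pi.basisFun ℂ (Fin 6)).linearIndependent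
  have : e₆ ∘ g = (Pi.basisFun ℂ (Fin 6)) ∘ g := by
    funext i; simp [e₆]
  rw [this]
  exact hb.comp g hg

lemma rank_span_e₆ {n : ℕ} (g : Fin n → Fin 6) (hg : Function.Injective g) :
    finrank ℂ (span ℂ (range (e₆ ∘ g))) = n := by
  rw [finrank_span_eq_card (e₆_li g hg)]
  simp

/-! ### Computation of `Sq` -/

lemma sq_mem_span (a₁ a₂ : ℂ) (u : Fin 6 → ℂ) :
    K1 a₁ a₂ u u = (a₁ * (u 0 * u 0)) • e₆ 3 + (u 3 * u 1 - u 4 * u 0) • e₆ 4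
      + (u 5 * u 0 - u 3 * u 2) • e₆ 5 := by
  rw [K1_vec]; module

lemma sq_mem_span₀ (a₂ : ℂ) (u : Fin 6 → ℂ) :
    K1 0 a₂ u u = (u 3 * u 1 - u 4 * u 0) • e₆ 4 + (u 5 * u 0 - u 3 * u 2) • e₆ 5 := by
  rw [K1_vec]; module

lemma e4_sq (a₁ a₂ : ℂ) : e₆ 4 = K1 a₁ a₂ ![0,1,0,1,0,0] ![0,1,0,1,0,0] := by
  rw [K1_apply]
  funext k
  fin_cases k <;> simp [e₆, Pi.single_apply, cv0, cv1, cv2, cv3, cv4, cv5]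

lemma e5_sq (a₁ a₂ : ℂ) : e₆ 5 = K1 a₁ a₂ ![0,0,-1,1,0,0] ![0,0,-1,1,0,0] := by
  rw [K1_apply]
  funext k
  fin_cases k <;> simp [e₆, Pi.single_apply, cv0, cv1, cv2, cv3, cv4, cv5]

lemma e3_sq (a₂ : ℂ) : e₆ 3 = K1 1 a₂ ![1,0,0,0,0,0] ![1,0,0,0,0,0] := by
  rw [K1_apply]
  funext k
  fin_cases k <;> simp [e₆, Pi.single_apply, cv0, cv1, cv2, cv3, cv4, cv5]

lemma Sq_one (a₂ : ℂ) : Sq 1 a₂ = span ℂ (range (e₆ ∘ ![3,4,5])) := by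
  apply le_antisymm
  · rw [Sq, span_le]
    rintro w ⟨u, rfl⟩
    rw [sq_mem_span]
    refine add_mem (add_mem (smul_mem _ _ (subset_span ⟨0, rfl⟩))
      (smul_mem _ _ (subset_span ⟨1, rfl⟩))) (smul_mem _ _ (subset_span ⟨2, rfl⟩))
  · rw [span_le]
    rintro w ⟨i, rfl⟩
    fin_cases i
    · exact subset_span ⟨_, e3_sq a₂⟩
    · exact subset_span ⟨_, e4_sq 1 a₂⟩
    · exact subset_span ⟨_, e5_sq 1 a₂⟩

lemma Sq_zero (a₂ : ℂ) : Sq 0 a₂ = span ℂ (range (e₆ ∘ ![4,5])) := by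
  apply le_antisymm
  · rw [Sq, span_le]
    rintro w ⟨u, rfl⟩
    rw [sq_mem_span₀]
    exact add_mem (smul_mem _ _ (subset_span ⟨0, rfl⟩)) (smul_mem _ _ (subset_span ⟨1, rfl⟩))
  · rw [span_le]
    rintro w ⟨i, rfl⟩
    fin_cases i
    · exact subset_span ⟨_, e4_sq 0 a₂⟩
    · exact subset_span ⟨_, e5_sq 0 a₂⟩

lemma rank_Sq_one (a₂ : ℂ) : finrank ℂ (Sq 1 a₂) = 3 := by
  rw [Sq_one, rank_span_e₆]
  decide

lemma rank_Sq_zero (a₂ : ℂ) : finrank ℂ (Sq 0 a₂) = 2 := by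
  rw [Sq_zero, rank_span_e₆]
  decide

/-! ### Computation of `Cc` -/

lemma e1_mem_Cc (a₁ : ℂ) : e₆ 1 ∈ Cc a₁ 0 := by
  intro u v
  rw [K1_apply a₁ 0 u v, K1_apply]
  funext k
  fin_cases k <;> simp [e₆, Pi.single_apply, cv0, cv1, cv2, cv3, cv4, cv5]

lemma e2_mem_Cc (a₁ : ℂ) : e₆ 2 ∈ Cc a₁ 0 := by
  intro u v
  rw [K1_apply a₁ 0 u v, K1_apply]
  funext k
  fin_cases k <;> simp [e₆, Pi.single_apply, cv0, cv1, cv2, cv3, cv4, cv5]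

lemma e4_mem_Cc (a₁ a₂ : ℂ) : e₆ 4 ∈ Cc a₁ a₂ := by
  intro u v
  rw [K1_apply a₁ a₂ u v, K1_apply]
  funext k
  fin_cases k <;> simp [e₆, Pi.single_apply, cv0, cv1, cv2, cv3, cv4, cv5]

lemma e5_mem_Cc (a₁ a₂ : ℂ) : e₆ 5 ∈ Cc a₁ a₂ := by
  intro u v
  rw [K1_apply a₁ a₂ u v, K1_apply]
  funext k
  fin_cases k <;> simp [e₆, Pi.single_apply, cv0, cv1, cv2, cv3, cv4, cv5]

lemma K1_e0_e1 (a₁ a₂ : ℂ) : K1 a₁ a₂ ![1,0,0,0,0,0] ![0,1,0,0,0,0] = ![0,1,0,0,0,0] := by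
  rw [K1_apply]
  funext k
  fin_cases k <;> simp [cv0, cv1, cv2, cv3, cv4, cv5]

lemma K1_e0_e2 (a₁ a₂ : ℂ) : K1 a₁ a₂ ![1,0,0,0,0,0] ![0,0,1,0,0,0] = ![0,0,-1,0,0,0] := by
  rw [K1_apply]
  funext k
  fin_cases k <;> simp [cv0, cv1, cv2, cv3, cv4, cv5]

lemma Cc_one (a₁ : ℂ) : Cc a₁ 1 = span ℂ (range (e₆ ∘ ![4,5])) := by
  apply le_antisymm
  · intro x hx
    have h1 := hx ![1,0,0,0,0,0] ![0,1,0,0,0,0]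
    have h2 := hx ![1,0,0,0,0,0] ![0,0,1,0,0,0]
    rw [K1_e0_e1, K1_apply] at h1
    rw [K1_e0_e2, K1_apply] at h2
    have hx0 : x 0 = 0 := by have := congrFun h1 1; simpa [cv1] using this
    have hx3 : x 3 = 0 := by have := congrFun h1 4; simpa [cv4] using this
    have hx2 : x 2 = 0 := by have := congrFun h1 3; simpa [cv3] using this
    have hx1 : x 1 = 0 := by have := congrFun h2 3; simpa [cv3] using this
    rw [mem_span_range_iff_exists_fun]
    refine ⟨![x 4, x 5], ?_⟩
    rw [Fin.sum_univ_two]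
    funext k
    fin_cases k <;>
      simp [e₆, Pi.single_apply, cv0, cv1, cv2, cv3, cv4, cv5, hx0, hx1, hx2, hx3]
  · rw [span_le]
    rintro w ⟨i, rfl⟩
    fin_cases i
    · exact e4_mem_Cc a₁ 1
    · exact e5_mem_Cc a₁ 1

lemma Cc_zero (a₁ : ℂ) : Cc a₁ 0 = span ℂ (range (e₆ ∘ ![1,2,4,5])) := by
  apply le_antisymm
  · intro x hx
    have h1 := hx ![1,0,0,0,0,0] ![0,1,0,0,0,0]
    rw [K1_e0_e1, K1_apply] at h1
    have hx0 : x 0 = 0 := by have := congrFun h1 1; simpa [cv1] using this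
    have hx3 : x 3 = 0 := by have := congrFun h1 4; simpa [cv4] using this
    rw [mem_span_range_iff_exists_fun]
    refine ⟨![x 1, x 2, x 4, x 5], ?_⟩
    rw [Fin.sum_univ_four]
    funext k
    fin_cases k <;>
      simp [e₆, Pi.single_apply, cv0, cv1, cv2, cv3, cv4, cv5, hx0, hx3]
  · rw [span_le]
    rintro w ⟨i, rfl⟩
    fin_cases i
    · exact e1_mem_Cc a₁
    · exact e2_mem_Cc a₁
    · exact e4_mem_Cc a₁ 0
    · exact e5_mem_Cc a₁ 0

lemma rank_Cc_one (a₁ : ℂ) : finrank ℂ (Cc a₁ 1) = 2 := by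
  rw [Cc_one, rank_span_e₆]
  decide

lemma rank_Cc_zero (a₁ : ℂ) : finrank ℂ (Cc a₁ 0) = 4 := by
  rw [Cc_zero, rank_span_e₆]
  decide

/-- The Leibniz algebras `K₁(1,1), K₁(1,0), K₁(0,1), K₁(0,0)` are pairwise
non-isomorphic. -/
theorem stmt_13 :
    ∀ p ∈ ({(1,1), (1,0), (0,1), (0,0)} : Set (ℂ × ℂ)),
      ∀ q ∈ ({(1,1), (1,0), (0,1), (0,0)} : Set (ℂ × ℂ)), p ≠ q →
        ¬ ∃ f : (Fin 6 → ℂ) ≃ₗ[ℂ] (Fin 6 → ℂ),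
            ∀ u v : Fin 6 → ℂ, f (K1 p.1 p.2 u v) = K1 q.1 q.2 (f u) (f v) := by
  intro p hp q hq hne hiso
  obtain ⟨f, hf⟩ := hiso
  simp only [Set.mem_insert_iff, Set.mem_singleton_iff] at hp hq
  have h1 := rank_Sq_eq hf
  have h2 := rank_Cc_eq hf
  rcases hp with rfl | rfl | rfl | rfl <;> rcases hq with rfl | rfl | rfl | rfl <;>
    first
      | exact hne rfl
      | (simp only [rank_Sq_one, rank_Sq_zero, rank_Cc_one, rank_Cc_zero] at h1 h2; omega)
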